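/- Let ν be a finitely supported signed measure on the lattice ball V_l ⊂ ℤ^d with total mass zero, invariant under sign flips of each coordinate (ν(x) = ν(x^{(i)}) for all i) and under transpositions of coordinates (ν(x) = ν(x^{↔(i,j)}) for all i < j). Let u : C_L → ℝ be a harmonic function of class C³ whose first, second, and third derivatives are bounded on C_L by M·L^{-(d+1)}, M·L^{-(d+2)}, M·L^{-(d+3)} respectively. Then for any y' with V_l(y') ⊂ C_{L/2}, |Σ_{y ∈ V_l(y')} ν(y-y') u(y)| ≤ C·‖ν‖_1·(l/L)³·L^{-d} for a constant C depending only on d and M. -/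

import Mathlib

open MeasureTheory Set

/-- Euclidean norm of a lattice point in `ℤ^d`. -/
noncomputable def znorm {d : ℕ} (x : Fin d → ℤ) : ℝ := Real.sqrt (∑ i, ((x i : ℝ)) ^ 2)

/-- The embedding of a lattice point of `ℤ^d` into Euclidean space `ℝ^d`. -/
noncomputable def latticeToE {d : ℕ} (x : Fin d → ℤ) : EuclideanSpace ℝ (Fin d) :=
  WithLp.toLp 2 (fun i => (x i : ℝ))

section Helpers

lemma norm_latticeToE {d : ℕ} (x : Fin d → ℤ) : ‖latticeToE x‖ = znorm x := by
  rw [EuclideanSpace.norm_eq]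
  simp [znorm, latticeToE, sq_abs]

lemma latticeToE_add {d : ℕ} (a b : Fin d → ℤ) :
    latticeToE (a + b) = latticeToE a + latticeToE b := by
  ext i
  simp [latticeToE]

lemma latticeToE_eq_sum {d : ℕ} (z : Fin d → ℤ) :
    latticeToE z = ∑ i, ((z i : ℝ)) • EuclideanSpace.single i (1 : ℝ) := by
  ext j
  rw [WithLp.ofLp_sum, Finset.sum_apply]
  simp [latticeToE, EuclideanSpace.single_apply]

variable {E : Type*} [NormedAddCommGroup E] [NormedSpace ℝ E]

/-- Second-order Taylor estimate along a segment. -/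
lemma taylor2_bound (u : E → ℝ) (p v : E) (K : ℝ) (hK : 0 ≤ K)
    (hd1 : ∀ t ∈ Icc (0:ℝ) 1, ContDiffAt ℝ 3 u (p + t • v))
    (h3 : ∀ t ∈ Icc (0:ℝ) 1,
      |fderiv ℝ (fderiv ℝ (fderiv ℝ u)) (p + t • v) v v v| ≤ K) :
    |u (p + v) - u p - fderiv ℝ u p v - fderiv ℝ (fderiv ℝ u) p v v / 2| ≤ K := by
  set A1 := fderiv ℝ u with hA1def
  set A2 := fderiv ℝ A1 with hA2def
  set A3 := fderiv ℝ A2 with hA3def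
  set c : ℝ → E := fun t => p + t • v with hcdef
  have hc : ∀ t : ℝ, HasDerivAt c v t := by
    intro t
    have : HasDerivAt (fun t : ℝ => t • v) ((1:ℝ) • v) t :=
      (hasDerivAt_id t).smul_const v
    simpa [hcdef] using this.const_add p
  set g : ℝ → ℝ := fun t => u (c t) with hgdef
  set g1 : ℝ → ℝ := fun t => A1 (c t) v with hg1def
  set g2 : ℝ → ℝ := fun t => A2 (c t) v v with hg2def
  set g3 : ℝ → ℝ := fun t => A3 (c t) v v v with hg3def
  have hg : ∀ t ∈ Icc (0:ℝ) 1, HasDerivAt g (g1 t) t := by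
    intro t ht
    have hu3 := hd1 t ht
    have hdu : DifferentiableAt ℝ u (c t) := hu3.differentiableAt (by norm_num)
    exact hdu.hasFDerivAt.comp_hasDerivAt t (hc t)
  have hg1 : ∀ t ∈ Icc (0:ℝ) 1, HasDerivAt g1 (g2 t) t := by
    intro t ht
    have hu3 := hd1 t ht
    have hA1c : ContDiffAt ℝ 2 A1 (c t) := hu3.fderiv_right (by norm_num)
    have hdA1 : DifferentiableAt ℝ A1 (c t) := hA1c.differentiableAt (by norm_num)
    have h := (hdA1.hasFDerivAt.comp_hasDerivAt t (hc t)).clm_apply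
      (hasDerivAt_const t v)
    simpa using h
  have hg2' : ∀ t ∈ Icc (0:ℝ) 1, HasDerivAt g2 (g3 t) t := by
    intro t ht
    have hu3 := hd1 t ht
    have hA1c : ContDiffAt ℝ 2 A1 (c t) := hu3.fderiv_right (by norm_num)
    have hA2c : ContDiffAt ℝ 1 A2 (c t) := hA1c.fderiv_right (by norm_num)
    have hdA2 : DifferentiableAt ℝ A2 (c t) := hA2c.differentiableAt (by norm_num)
    have h1 := HasFDerivAt.comp_hasDerivAt (l := A2) (l' := fderiv ℝ A2 (c t)) t hdA2.hasFDerivAt (hc t)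
    have h2 := h1.clm_apply (hasDerivAt_const t v)
    have h := h2.clm_apply (hasDerivAt_const t v)
    simpa using h
  -- Step 1: |g2 t - g2 0| ≤ K on [0,1]
  have step1 : ∀ t ∈ Icc (0:ℝ) 1, |g2 t - g2 0| ≤ K := by
    intro t ht
    have h := (convex_Icc (0:ℝ) 1).norm_image_sub_le_of_norm_hasDerivWithin_le
      (f := g2) (f' := g3)
      (fun x hx => (hg2' x hx).hasDerivWithinAt)
      (fun x hx => by simpa [Real.norm_eq_abs] using h3 x hx)
      (by norm_num : (0:ℝ) ∈ Icc (0:ℝ) 1) ht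
    calc |g2 t - g2 0| ≤ K * ‖t - 0‖ := by simpa [Real.norm_eq_abs] using h
    _ ≤ K * 1 := by
        apply mul_le_mul_of_nonneg_left _ hK
        rw [Real.norm_eq_abs, sub_zero, abs_of_nonneg ht.1]; exact ht.2
    _ = K := mul_one K
  -- Step 2: ψ t = g1 t - g1 0 - t * g2 0, |ψ t| ≤ K
  set ψ : ℝ → ℝ := fun t => g1 t - g1 0 - t * g2 0 with hψdef
  have hψ' : ∀ t ∈ Icc (0:ℝ) 1, HasDerivAt ψ (g2 t - g2 0) t := by
    intro t ht
    have h := ((hg1 t ht).sub_const (g1 0)).sub ((hasDerivAt_id t).mul_const (g2 0))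
    have h' : HasDerivAt ψ (g2 t - 1 * g2 0) t := h
    simpa using h'
  have step2 : ∀ t ∈ Icc (0:ℝ) 1, |ψ t| ≤ K := by
    intro t ht
    have h := (convex_Icc (0:ℝ) 1).norm_image_sub_le_of_norm_hasDerivWithin_le
      (f := ψ) (f' := fun t => g2 t - g2 0)
      (fun x hx => (hψ' x hx).hasDerivWithinAt)
      (fun x hx => by simpa [Real.norm_eq_abs] using step1 x hx)
      (by norm_num : (0:ℝ) ∈ Icc (0:ℝ) 1) ht
    have hψ0 : ψ 0 = 0 := by simp [hψdef]
    calc |ψ t| = |ψ t - ψ 0| := by rw [hψ0, sub_zero]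
    _ ≤ K * ‖t - 0‖ := by simpa [Real.norm_eq_abs] using h
    _ ≤ K * 1 := by
        apply mul_le_mul_of_nonneg_left _ hK
        rw [Real.norm_eq_abs, sub_zero, abs_of_nonneg ht.1]; exact ht.2
    _ = K := mul_one K
  -- Step 3: χ t = g t - g 0 - t * g1 0 - t^2/2 * g2 0
  set χ : ℝ → ℝ := fun t => g t - g 0 - t * g1 0 - t ^ 2 / 2 * g2 0 with hχdef
  have hχ' : ∀ t ∈ Icc (0:ℝ) 1, HasDerivAt χ (ψ t) t := by
    intro t ht
    have hpow : HasDerivAt (fun t : ℝ => t ^ 2 / 2 * g2 0)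
        ((2 * t ^ 1) / 2 * g2 0) t :=
      ((hasDerivAt_pow 2 t).div_const 2).mul_const (g2 0)
    have h := (((hg t ht).sub_const (g 0)).sub
      ((hasDerivAt_id t).mul_const (g1 0))).sub hpow
    have : g1 t - 1 * g1 0 - 2 * t ^ 1 / 2 * g2 0 = ψ t := by
      simp only [hψdef]; ring
    rw [this] at h
    exact h
  have step3 : |χ 1 - χ 0| ≤ K * ‖(1:ℝ) - 0‖ :=
    (convex_Icc (0:ℝ) 1).norm_image_sub_le_of_norm_hasDerivWithin_le
      (f := χ) (f' := ψ)
      (fun x hx => (hχ' x hx).hasDerivWithinAt)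
      (fun x hx => by simpa [Real.norm_eq_abs] using step2 x hx)
      (by norm_num : (0:ℝ) ∈ Icc (0:ℝ) 1) (by norm_num : (1:ℝ) ∈ Icc (0:ℝ) 1)
  have hc1 : c 1 = p + v := by simp [hcdef]
  have hc0 : c 0 = p := by simp [hcdef]
  have hχ1 : χ 1 - χ 0 = u (p + v) - u p - A1 p v - A2 p v v / 2 := by
    simp [hχdef, hgdef, hg1def, hg2def, hc1, hc0]; ring
  rw [hχ1] at step3
  simpa using step3

/-- Sum vanishes by a sign-flip involution. -/
lemma sum_flip_zero {d : ℕ} (ν : (Fin d → ℤ) →₀ ℝ)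
    (hflip : ∀ (x : Fin d → ℤ) (i : Fin d), ν (Function.update x i (-(x i))) = ν x)
    (i : Fin d) (F : (Fin d → ℤ) → ℝ)
    (hF : ∀ z, F (Function.update z i (-(z i))) = - F z)
    (hF0 : ∀ z, z i = 0 → F z = 0) :
    ∑ z ∈ ν.support, ν z * F z = 0 := by
  classical
  refine Finset.sum_involution (fun z _ => Function.update z i (-(z i))) ?_ ?_ ?_ ?_
  · intro z hz; rw [hflip, hF]; ring
  · intro z hz hne heq
    apply hne
    have hzi : z i = 0 := by
      have := congrFun heq i
      simp only [Function.update_self] at this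
      omega
    rw [hF0 z hzi, mul_zero]
  · intro z hz
    rwa [Finsupp.mem_support_iff, hflip, ← Finsupp.mem_support_iff]
  · intro z hz
    funext j
    by_cases hj : j = i
    · subst hj; simp
    · simp [Function.update_of_ne hj]

/-- The diagonal second moments are all equal, by swap invariance. -/
lemma sum_swap_eq {d : ℕ} (ν : (Fin d → ℤ) →₀ ℝ)
    (hswap : ∀ (x : Fin d → ℤ) (i j : Fin d), ν (x ∘ Equiv.swap i j) = ν x)
    (i j : Fin d) :
    ∑ z ∈ ν.support, ν z * (((z i : ℝ)) * ((z i : ℝ)))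
      = ∑ z ∈ ν.support, ν z * (((z j : ℝ)) * ((z j : ℝ))) := by
  classical
  refine Finset.sum_nbij' (fun z => z ∘ Equiv.swap i j) (fun z => z ∘ Equiv.swap i j)
    ?_ ?_ ?_ ?_ ?_
  · intro z hz
    simp only [Finsupp.mem_support_iff, hswap] at hz ⊢; exact hz
  · intro z hz
    simp only [Finsupp.mem_support_iff, hswap] at hz ⊢; exact hz
  · intro z hz; funext a; simp [Function.comp, Equiv.swap_apply_self]
  · intro z hz; funext a; simp [Function.comp, Equiv.swap_apply_self]
  · intro z hz
    rw [hswap]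
    simp [Function.comp, Equiv.swap_apply_right]

end Helpers

/-- Let `ν` be a finitely supported signed measure on the lattice ball
`V_l ⊆ ℤ^d` with total mass zero, invariant under sign flips of each coordinate and under
transpositions of coordinates. Let `u` be a harmonic `C³` function on the ball `C_L`
whose derivatives of order `1, 2, 3` are bounded by `M·L^{-(d+k)}`. Then for any lattice
point `y'` with `V_l(y') ⊆ C_{L/2}`,
`|∑_{y∈V_l(y')} ν(y-y') u(y)| ≤ C ‖ν‖₁ (l/L)³ L^{-d}`, with `C` depending only on
`d` and `M`. -/
theorem stmt11 (d : ℕ) (hd : 1 ≤ d) (M : ℝ) (hM : 0 < M) :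
    ∃ C > (0 : ℝ), ∀ (l L : ℝ), 0 < l → 0 < L →
      ∀ ν : (Fin d → ℤ) →₀ ℝ,
        (∀ x ∈ ν.support, znorm x ≤ l) →
        (ν.sum fun _ v => v) = 0 →
        (∀ (x : Fin d → ℤ) (i : Fin d), ν (Function.update x i (-(x i))) = ν x) →
        (∀ (x : Fin d → ℤ) (i j : Fin d), ν (x ∘ Equiv.swap i j) = ν x) →
      ∀ u : EuclideanSpace ℝ (Fin d) → ℝ,
        ContDiffOn ℝ 3 u (Metric.ball 0 L) →
        (∀ x ∈ Metric.ball (0 : EuclideanSpace ℝ (Fin d)) L,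
          ∑ i : Fin d, iteratedFDerivWithin ℝ 2 u (Metric.ball 0 L) x
            ![EuclideanSpace.single i (1 : ℝ), EuclideanSpace.single i (1 : ℝ)] = 0) →
        (∀ k : ℕ, 1 ≤ k → k ≤ 3 →
          ∀ x ∈ Metric.ball (0 : EuclideanSpace ℝ (Fin d)) L,
            ‖iteratedFDerivWithin ℝ k u (Metric.ball 0 L) x‖
              ≤ M * L ^ (-((d : ℝ) + k))) →
      ∀ y' : Fin d → ℤ,
        (∀ z : Fin d → ℤ, znorm (z - y') ≤ l → ‖latticeToE z‖ < L / 2) →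
        |∑ z ∈ ν.support, ν z * u (latticeToE (y' + z))|
          ≤ C * (ν.sum fun _ v => |v|) * (l / L) ^ 3 * L ^ (-(d : ℝ)) := by
  refine ⟨M, hM, ?_⟩
  intro l L hl hL ν hsupp hmass hflip hswap u hu hharm hbound y' hy'
  classical
  have hBopen : IsOpen (Metric.ball (0 : EuclideanSpace ℝ (Fin d)) L) := Metric.isOpen_ball
  set p := latticeToE y' with hpdef
  set v : (Fin d → ℤ) → EuclideanSpace ℝ (Fin d) := fun z => latticeToE z with hvdef
  -- membership facts
  have hpmem : ‖p‖ < L / 2 := by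
    apply hy'
    have h0 : y' - y' = 0 := sub_self y'
    rw [h0]
    have h1 : znorm (0 : Fin d → ℤ) = 0 := by simp [znorm]
    rw [h1]
    exact hl.le
  have hnvz : ∀ z ∈ ν.support, ‖v z‖ ≤ l := by
    intro z hz
    rw [hvdef]
    rw [norm_latticeToE]
    exact hsupp z hz
  have hpvmem : ∀ z ∈ ν.support, ‖p + v z‖ < L / 2 := by
    intro z hz
    have h1 : p + v z = latticeToE (y' + z) := by
      rw [hpdef, hvdef, latticeToE_add]
    rw [h1]
    apply hy'
    have : y' + z - y' = z := by ring
    rw [this]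
    exact hsupp z hz
  have hsegL2 : ∀ z ∈ ν.support, ∀ t ∈ Icc (0:ℝ) 1,
      p + t • v z ∈ Metric.ball (0 : EuclideanSpace ℝ (Fin d)) (L/2) := by
    intro z hz t ht
    have heq : p + t • v z = (1 - t) • p + t • (p + v z) := by
      rw [sub_smul, one_smul, smul_add]; abel
    have h1 : p ∈ Metric.ball (0 : EuclideanSpace ℝ (Fin d)) (L/2) :=
      mem_ball_zero_iff.2 hpmem
    have h2 : p + v z ∈ Metric.ball (0 : EuclideanSpace ℝ (Fin d)) (L/2) :=
      mem_ball_zero_iff.2 (hpvmem z hz)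
    have := (convex_ball (0 : EuclideanSpace ℝ (Fin d)) (L/2)) h1 h2
      (by linarith [ht.2] : (0:ℝ) ≤ 1 - t) ht.1 (by ring)
    rwa [← heq] at this
  have hsub : Metric.ball (0 : EuclideanSpace ℝ (Fin d)) (L/2)
      ⊆ Metric.ball (0 : EuclideanSpace ℝ (Fin d)) L :=
    Metric.ball_subset_ball (by linarith)
  have hseg : ∀ z ∈ ν.support, ∀ t ∈ Icc (0:ℝ) 1,
      p + t • v z ∈ Metric.ball (0 : EuclideanSpace ℝ (Fin d)) L :=
    fun z hz t ht => hsub (hsegL2 z hz t ht)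
  have hpB : p ∈ Metric.ball (0 : EuclideanSpace ℝ (Fin d)) L :=
    hsub (mem_ball_zero_iff.2 hpmem)
  have hCD : ∀ x ∈ Metric.ball (0 : EuclideanSpace ℝ (Fin d)) L, ContDiffAt ℝ 3 u x :=
    fun x hx => hu.contDiffAt (hBopen.mem_nhds hx)
  -- third derivative bound
  have hM3pos : (0:ℝ) < M * L ^ (-((d:ℝ) + 3)) := by positivity
  have h3b : ∀ x ∈ Metric.ball (0 : EuclideanSpace ℝ (Fin d)) L,
      ∀ w : EuclideanSpace ℝ (Fin d),
      |fderiv ℝ (fderiv ℝ (fderiv ℝ u)) x w w w| ≤ M * L ^ (-((d:ℝ) + 3)) * ‖w‖^3 := by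
    intro x hx w
    have he3 : fderiv ℝ (fderiv ℝ (fderiv ℝ u)) x w w w
        = iteratedFDeriv ℝ 3 u x ![w, w, w] := by
      rw [iteratedFDeriv_succ_apply_right, iteratedFDeriv_two_apply]; rfl
    rw [he3]
    have hle := (iteratedFDeriv ℝ 3 u x).le_opNorm ![w, w, w]
    have hprod : (∏ i : Fin 3, ‖(![w, w, w] : Fin 3 → EuclideanSpace ℝ (Fin d)) i‖)
        = ‖w‖ ^ 3 := by
      simp [Fin.prod_univ_three]; ring
    rw [hprod] at hle
    have hn : ‖iteratedFDeriv ℝ 3 u x‖ ≤ M * L ^ (-((d:ℝ) + 3)) := by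
      have h := hbound 3 (by norm_num) (by norm_num) x hx
      rw [iteratedFDerivWithin_of_isOpen 3 hBopen hx] at h
      convert h using 3 <;> norm_num
    calc |iteratedFDeriv ℝ 3 u x ![w, w, w]|
        ≤ ‖iteratedFDeriv ℝ 3 u x‖ * ‖w‖ ^ 3 := hle
      _ ≤ M * L ^ (-((d:ℝ) + 3)) * ‖w‖ ^ 3 :=
          mul_le_mul_of_nonneg_right hn (by positivity)
  -- Taylor estimate for each z
  have hTay : ∀ z ∈ ν.support,
      |u (p + v z) - u p - fderiv ℝ u p (v z)
        - fderiv ℝ (fderiv ℝ u) p (v z) (v z) / 2|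
        ≤ M * L ^ (-((d:ℝ) + 3)) * l ^ 3 := by
    intro z hz
    apply taylor2_bound u p (v z) _ (by positivity)
    · intro t ht; exact hCD _ (hseg z hz t ht)
    · intro t ht
      refine le_trans (h3b _ (hseg z hz t ht) (v z)) ?_
      have := pow_le_pow_left₀ (norm_nonneg (v z)) (hnvz z hz) 3
      exact mul_le_mul_of_nonneg_left this hM3pos.le
  -- first moments vanish
  have hmom1 : ∀ i : Fin d, ∑ z ∈ ν.support, ν z * ((z i : ℝ)) = 0 := by
    intro i
    apply sum_flip_zero ν hflip i
    · intro z
      simp [Function.update_self]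
    · intro z h; simp [h]
  -- mixed second moments vanish
  have hmom2 : ∀ i j : Fin d, j ≠ i →
      ∑ z ∈ ν.support, ν z * (((z i : ℝ)) * ((z j : ℝ))) = 0 := by
    intro i j hij
    apply sum_flip_zero ν hflip i
    · intro z
      rw [Function.update_self, Function.update_of_ne hij]
      push_cast; ring
    · intro z h; simp [h]
  -- diagonal second moments are equal
  set i0 : Fin d := ⟨0, hd⟩ with hi0
  set a : ℝ := ∑ z ∈ ν.support, ν z * (((z i0 : ℝ)) * ((z i0 : ℝ))) with hadef
  have hmomdiag : ∀ i : Fin d,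
      ∑ z ∈ ν.support, ν z * (((z i : ℝ)) * ((z i : ℝ))) = a :=
    fun i => sum_swap_eq ν hswap i i0
  -- expansion of linear forms
  have hexp1 : ∀ (T : EuclideanSpace ℝ (Fin d) →L[ℝ] ℝ) (z : Fin d → ℤ),
      T (v z) = ∑ i, ((z i : ℝ)) * T (EuclideanSpace.single i (1:ℝ)) := by
    intro T z
    rw [hvdef]
    simp only
    rw [latticeToE_eq_sum, map_sum]
    refine Finset.sum_congr rfl fun i _ => ?_
    rw [ContinuousLinearMap.map_smul, smul_eq_mul]
  -- harmonicity at p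
  have hQharm : ∑ i, fderiv ℝ (fderiv ℝ u) p
      (EuclideanSpace.single i (1:ℝ)) (EuclideanSpace.single i (1:ℝ)) = 0 := by
    have h := hharm p hpB
    rw [← h]
    refine Finset.sum_congr rfl fun i _ => ?_
    rw [iteratedFDerivWithin_of_isOpen 2 hBopen hpB, iteratedFDeriv_two_apply]
    rfl
  -- the linear term vanishes
  have hsum1 : ∑ z ∈ ν.support, ν z * fderiv ℝ u p (v z) = 0 := by
    calc ∑ z ∈ ν.support, ν z * fderiv ℝ u p (v z)
        = ∑ z ∈ ν.support, ∑ i,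
            fderiv ℝ u p (EuclideanSpace.single i (1:ℝ)) * (ν z * ((z i : ℝ))) := by
          refine Finset.sum_congr rfl fun z _ => ?_
          rw [hexp1 (fderiv ℝ u p) z, Finset.mul_sum]
          exact Finset.sum_congr rfl fun i _ => by ring
      _ = ∑ i, fderiv ℝ u p (EuclideanSpace.single i (1:ℝ))
            * ∑ z ∈ ν.support, ν z * ((z i : ℝ)) := by
          rw [Finset.sum_comm]
          exact Finset.sum_congr rfl fun i _ => (Finset.mul_sum _ _ _).symm
      _ = 0 := Finset.sum_eq_zero fun i _ => by rw [hmom1 i, mul_zero]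
  -- the quadratic term vanishes
  have hexp2 : ∀ z : Fin d → ℤ,
      fderiv ℝ (fderiv ℝ u) p (v z) (v z)
        = ∑ i, ∑ j, (((z i : ℝ)) * ((z j : ℝ)))
            * fderiv ℝ (fderiv ℝ u) p
              (EuclideanSpace.single i (1:ℝ)) (EuclideanSpace.single j (1:ℝ)) := by
    intro z
    have h1 : fderiv ℝ (fderiv ℝ u) p (v z)
        = ∑ i, ((z i : ℝ)) • fderiv ℝ (fderiv ℝ u) p (EuclideanSpace.single i (1:ℝ)) := by
      rw [hvdef]
      simp only
      rw [latticeToE_eq_sum, map_sum]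
      exact Finset.sum_congr rfl fun i _ => by rw [ContinuousLinearMap.map_smul]
    rw [h1, ContinuousLinearMap.sum_apply]
    refine Finset.sum_congr rfl fun i _ => ?_
    rw [ContinuousLinearMap.smul_apply, smul_eq_mul,
      hexp1 (fderiv ℝ (fderiv ℝ u) p (EuclideanSpace.single i (1:ℝ))) z,
      Finset.mul_sum]
    exact Finset.sum_congr rfl fun j _ => by ring
  have hsum2 : ∑ z ∈ ν.support, ν z * fderiv ℝ (fderiv ℝ u) p (v z) (v z) = 0 := by
    calc ∑ z ∈ ν.support, ν z * fderiv ℝ (fderiv ℝ u) p (v z) (v z)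
        = ∑ z ∈ ν.support, ∑ i, ∑ j,
            fderiv ℝ (fderiv ℝ u) p (EuclideanSpace.single i (1:ℝ))
              (EuclideanSpace.single j (1:ℝ)) * (ν z * (((z i : ℝ)) * ((z j : ℝ)))) := by
          refine Finset.sum_congr rfl fun z _ => ?_
          rw [hexp2 z, Finset.mul_sum]
          refine Finset.sum_congr rfl fun i _ => ?_
          rw [Finset.mul_sum]
          exact Finset.sum_congr rfl fun j _ => by ring
      _ = ∑ i, ∑ j,
            fderiv ℝ (fderiv ℝ u) p (EuclideanSpace.single i (1:ℝ))
              (EuclideanSpace.single j (1:ℝ))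
              * ∑ z ∈ ν.support, ν z * (((z i : ℝ)) * ((z j : ℝ))) := by
          rw [Finset.sum_comm]
          refine Finset.sum_congr rfl fun i _ => ?_
          rw [Finset.sum_comm]
          exact Finset.sum_congr rfl fun j _ => (Finset.mul_sum _ _ _).symm
      _ = ∑ i, fderiv ℝ (fderiv ℝ u) p (EuclideanSpace.single i (1:ℝ))
              (EuclideanSpace.single i (1:ℝ)) * a := by
          refine Finset.sum_congr rfl fun i _ => ?_
          rw [Finset.sum_eq_single i]
          · rw [hmomdiag i]
          · intro j _ hji
            rw [hmom2 i j hji, mul_zero]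
          · intro h; exact absurd (Finset.mem_univ i) h
      _ = (∑ i, fderiv ℝ (fderiv ℝ u) p (EuclideanSpace.single i (1:ℝ))
              (EuclideanSpace.single i (1:ℝ))) * a := (Finset.sum_mul _ _ _).symm
      _ = 0 := by rw [hQharm, zero_mul]
  -- total mass zero
  have hz0 : ∑ z ∈ ν.support, ν z = 0 := hmass
  -- main decomposition
  set R : (Fin d → ℤ) → ℝ := fun z =>
    u (p + v z) - u p - fderiv ℝ u p (v z)
      - fderiv ℝ (fderiv ℝ u) p (v z) (v z) / 2 with hRdef
  have hsplit : ∑ z ∈ ν.support, ν z * u (latticeToE (y' + z))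
      = ∑ z ∈ ν.support, ν z * R z := by
    calc ∑ z ∈ ν.support, ν z * u (latticeToE (y' + z))
        = ∑ z ∈ ν.support, (ν z * R z + (ν z * u p
            + (ν z * fderiv ℝ u p (v z)
            + ν z * fderiv ℝ (fderiv ℝ u) p (v z) (v z) / 2))) := by
          refine Finset.sum_congr rfl fun z _ => ?_
          have h1 : latticeToE (y' + z) = p + v z := by
            rw [hpdef, hvdef, latticeToE_add]
          rw [h1, hRdef]
          ring
      _ = ∑ z ∈ ν.support, ν z * R z + ((∑ z ∈ ν.support, ν z * u p)
            + ((∑ z ∈ ν.support, ν z * fderiv ℝ u p (v z))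
            + ∑ z ∈ ν.support, ν z * fderiv ℝ (fderiv ℝ u) p (v z) (v z) / 2)) := by
          rw [Finset.sum_add_distrib, Finset.sum_add_distrib, Finset.sum_add_distrib]
      _ = ∑ z ∈ ν.support, ν z * R z := by
          have e1 : ∑ z ∈ ν.support, ν z * u p = 0 := by
            rw [← Finset.sum_mul, hz0, zero_mul]
          have e3 : ∑ z ∈ ν.support, ν z * fderiv ℝ (fderiv ℝ u) p (v z) (v z) / 2
              = 0 := by
            rw [← Finset.sum_div, hsum2, zero_div]
          rw [e1, hsum1, e3]; ring
  rw [hsplit]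
  -- final estimate
  have habs : |∑ z ∈ ν.support, ν z * R z|
      ≤ (∑ z ∈ ν.support, |ν z|) * (M * L ^ (-((d:ℝ) + 3)) * l ^ 3) := by
    calc |∑ z ∈ ν.support, ν z * R z|
        ≤ ∑ z ∈ ν.support, |ν z * R z| := Finset.abs_sum_le_sum_abs _ _
      _ ≤ ∑ z ∈ ν.support, |ν z| * (M * L ^ (-((d:ℝ) + 3)) * l ^ 3) := by
          refine Finset.sum_le_sum fun z hz => ?_
          rw [abs_mul]
          exact mul_le_mul_of_nonneg_left (hTay z hz) (abs_nonneg _)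
      _ = (∑ z ∈ ν.support, |ν z|) * (M * L ^ (-((d:ℝ) + 3)) * l ^ 3) :=
          (Finset.sum_mul _ _ _).symm
  have hS1 : (ν.sum fun _ w => |w|) = ∑ z ∈ ν.support, |ν z| := rfl
  rw [hS1]
  refine le_trans habs (le_of_eq ?_)
  have h3 : L ^ (-((d:ℝ) + 3)) = L ^ (-(d:ℝ)) * (L ^ (3:ℕ))⁻¹ := by
    have h33 : L ^ (-((3:ℕ):ℝ)) = (L ^ (3:ℕ))⁻¹ := by
      rw [Real.rpow_neg hL.le, Real.rpow_natCast]
    rw [show -((d:ℝ) + 3) = (-(d:ℝ)) + (-((3:ℕ):ℝ)) by push_cast; ring,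
      Real.rpow_add hL, h33]
  rw [h3, div_pow]
  field_simp
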